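/- Let n ≥ 2, let c be a coloring of n strands and set t = t_{c_n}. Suppose A is an (n−1)×(n−1) matrix over Λ_μ and v is a row vector of length n−1 over Λ_μ such that (A, v) satisfies the boundary relation for c. Let M = [[A,0],[v,1]] and let G' be the n×n matrix equal to the identity except in its last 2×2 diagonal block, which equals [[1, 1],[0, −t^{−1}]] (G' is the reduced colored Gassner matrix of the stabilizing generator σ_n^{−1} for the coloring (c_1,…,c_n,c_n) of n+1 strands; it is the inverse of the block [[1,t],[0,−t]]). Then (T^c_n − 1) · det(M·G' − I_n) = t^{−1}·(1 − T^c_{n−1}·t²) · det(A − I_{n−1}). (This is the determinant identity establishing invariance of the paper's invariant f under the negative second colored Markov move.) -/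

import Mathlib

noncomputable section

open scoped BigOperators

/-- The multivariable Laurent polynomial ring `Λ_μ = ℤ[t₁^{±1},…,t_μ^{±1}]`,
realized as the group ℤ-algebra of `ℤ^μ`. -/
abbrev Lau (μ : ℕ) : Type := AddMonoidAlgebra ℤ (Fin μ →₀ ℤ)

instance (μ : ℕ) : IsDomain (Lau μ) := NoZeroDivisors.to_isDomain _

/-- The distinguished unit `t_i` of `Λ_μ`. -/
def tU {μ : ℕ} (i : Fin μ) : (Lau μ)ˣ where
  val := AddMonoidAlgebra.single (Finsupp.single i 1) 1
  inv := AddMonoidAlgebra.single (Finsupp.single i (-1)) 1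
  val_inv := by
    rw [AddMonoidAlgebra.single_mul_single, ← Finsupp.single_add]
    norm_num; rfl
  inv_val := by
    rw [AddMonoidAlgebra.single_mul_single, ← Finsupp.single_add]
    norm_num; rfl

/-- `T^c_i = t_{c_1} ⋯ t_{c_i}` (product of the first `i` values of the coloring,
zero-indexed: product over indices `k ≤ i`), as a unit of `Λ_μ`. -/
def TU {μ n : ℕ} (c : Fin n → Fin μ) (i : Fin n) : (Lau μ)ˣ :=
  ∏ k ∈ Finset.Iic i, tU (c k)

/-- The `n×n` matrix `[[A,0],[v,1]]` built from an `(n−1)×(n−1)` matrix `A`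
and a row vector `v` of length `n−1` (here `n = l+2`): the upper-left block is `A`,
the last column is `(0,…,0,1)ᵀ` and the last row begins with `v`. -/
def aug {μ l : ℕ} (A : Matrix (Fin (l+1)) (Fin (l+1)) (Lau μ)) (v : Fin (l+1) → Lau μ) :
    Matrix (Fin (l+2)) (Fin (l+2)) (Lau μ) := fun i j =>
  if hi : (i : ℕ) < l + 1 then
    if hj : (j : ℕ) < l + 1 then A ⟨i, hi⟩ ⟨j, hj⟩ else 0
  else
    if hj : (j : ℕ) < l + 1 then v ⟨j, hj⟩ else 1

/-- The pair `(A, v)` satisfies the boundary relation for the coloring `c`: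
for every column `j`, `∑_{i=1}^{n−1} (T^c_i − 1)(A − I)_{ij} = −(T^c_n − 1) v_j`. -/
def BoundaryRel {μ l : ℕ} (c : Fin (l+2) → Fin μ) (A : Matrix (Fin (l+1)) (Fin (l+1)) (Lau μ))
    (v : Fin (l+1) → Lau μ) : Prop :=
  ∀ j : Fin (l+1), ∑ i : Fin (l+1),
      ((TU c i.castSucc : Lau μ) - 1) * (A - 1) i j
    = -((TU c (Fin.last (l+1)) : Lau μ) - 1) * v j

/-- The `(l+2)×(l+2)` matrix equal to the identity except in its last `2×2`
diagonal block, which is `[[a,b],[c,d]]`. -/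
def last2Block {μ : ℕ} (l : ℕ) (a b c d : Lau μ) :
    Matrix (Fin (l+2)) (Fin (l+2)) (Lau μ) := fun i j =>
  if (i : ℕ) = l ∧ (j : ℕ) = l then a
  else if (i : ℕ) = l ∧ (j : ℕ) = l + 1 then b
  else if (i : ℕ) = l + 1 ∧ (j : ℕ) = l then c
  else if (i : ℕ) = l + 1 ∧ (j : ℕ) = l + 1 then d
  else if i = j then 1 else 0

lemma mulG'_apply {μ l : ℕ} (A : Matrix (Fin (l+1)) (Fin (l+1)) (Lau μ)) (v : Fin (l+1) → Lau μ)
    (d : Lau μ) (i j : Fin (l+2)) :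
    (aug A v * last2Block l 1 1 0 d) i j =
      if (j : ℕ) < l + 1 then aug A v i j
      else aug A v i ⟨l, by omega⟩ + aug A v i (Fin.last (l+1)) * d := by
  rw [Matrix.mul_apply]
  by_cases hj : (j : ℕ) < l + 1
  · rw [if_pos hj]
    have hcol : ∀ k, last2Block l 1 1 0 d k j = if k = j then 1 else 0 := by
      intro k
      simp only [last2Block, Fin.ext_iff]
      split_ifs <;> first | rfl | omega
    simp [hcol, mul_ite]
  · rw [if_neg hj]
    have hj' : (j : ℕ) = l + 1 := by have := j.isLt; omega
    have hcol : ∀ k, last2Block l 1 1 0 d k j =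
        (if k = (⟨l, by omega⟩ : Fin (l+2)) then (1 : Lau μ) else 0)
          + (if k = Fin.last (l+1) then d else 0) := by
      intro k
      simp only [last2Block, Fin.ext_iff, Fin.val_last]
      split_ifs <;> first | omega | simp
    simp [hcol, mul_add, mul_ite, Finset.sum_add_distrib]

/-- The matrix `M·G' − 1` in explicit block form. -/
def Np {μ l : ℕ} (A : Matrix (Fin (l+1)) (Fin (l+1)) (Lau μ)) (v : Fin (l+1) → Lau μ)
    (s : Lau μ) : Matrix (Fin (l+2)) (Fin (l+2)) (Lau μ) := fun i j =>
  if hi : (i : ℕ) < l + 1 then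
    if hj : (j : ℕ) < l + 1 then (A - 1) ⟨i, hi⟩ ⟨j, hj⟩ else A ⟨i, hi⟩ (Fin.last l)
  else
    if hj : (j : ℕ) < l + 1 then v ⟨j, hj⟩ else s

lemma key1 {μ l : ℕ} (A : Matrix (Fin (l+1)) (Fin (l+1)) (Lau μ)) (v : Fin (l+1) → Lau μ)
    (d : Lau μ) :
    aug A v * last2Block l 1 1 0 d - 1 = Np A v (v (Fin.last l) + d - 1) := by
  ext i j : 2
  rw [Matrix.sub_apply, mulG'_apply, Np]
  by_cases hj : (j : ℕ) < l + 1
  · rw [if_pos hj]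
    by_cases hi : (i : ℕ) < l + 1
    · rw [dif_pos hi, dif_pos hj]
      simp only [aug, dif_pos hi, dif_pos hj, Matrix.sub_apply, Matrix.one_apply, Fin.ext_iff]
    · rw [dif_neg hi, dif_pos hj]
      have hij : i ≠ j := Fin.ne_of_val_ne (by omega)
      simp only [aug, dif_neg hi, dif_pos hj, Matrix.one_apply, if_neg hij, sub_zero]
  · rw [if_neg hj]
    have hj' : (j : ℕ) = l + 1 := by have := j.isLt; omega
    by_cases hi : (i : ℕ) < l + 1
    · rw [dif_pos hi, dif_neg hj]
      have hij : i ≠ j := Fin.ne_of_val_ne (by omega)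
      have hl : ((⟨l, by omega⟩ : Fin (l+2)) : ℕ) < l + 1 := by simp
      simp only [aug, dif_pos hi, dif_pos hl, dif_neg (by simp [Fin.val_last] : ¬ ((Fin.last (l+1) : ℕ) < l + 1)),
        Matrix.one_apply, if_neg hij, sub_zero, zero_mul, add_zero]
      congr 1
    · rw [dif_neg hi, dif_neg hj]
      have hij : i = j := by rw [Fin.ext_iff]; have := i.isLt; omega
      have hl : ((⟨l, by omega⟩ : Fin (l+2)) : ℕ) < l + 1 := by simp
      simp only [aug, dif_neg hi, dif_pos hl, dif_neg (by simp [Fin.val_last] : ¬ ((Fin.last (l+1) : ℕ) < l + 1)),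
        Matrix.one_apply, if_pos hij, one_mul]
      congr 1

lemma TU_last {μ l : ℕ} (c : Fin (l+2) → Fin μ) :
    TU c (Fin.last (l+1)) = tU (c (Fin.last (l+1))) * TU c ((Fin.last l).castSucc) := by
  have hnot : Fin.last (l+1) ∉ Finset.Iic ((Fin.last l).castSucc) := by
    simp [Finset.mem_Iic, Fin.le_def]
  have hins : Finset.Iic (Fin.last (l+1)) =
      insert (Fin.last (l+1)) (Finset.Iic ((Fin.last l).castSucc)) := by
    ext k
    simp only [Finset.mem_Iic, Finset.mem_insert, Fin.le_def, Fin.ext_iff, Fin.val_last,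
      Fin.coe_castSucc]
    have := k.isLt; omega
  rw [TU, hins, Finset.prod_insert hnot]; rfl


/-- the determinant identity for the negative stabilization. With
`t = t_{c_n}`, `M = [[A,0],[v,1]]` and `G'` the identity except for the last `2×2`
diagonal block `[[1,1],[0,−t⁻¹]]`, if `(A,v)` satisfies the boundary relation for `c` then
`(T^c_n − 1) · det(M·G' − I_n) = t⁻¹ (1 − T^c_{n−1} t²) · det(A − I_{n−1})`
(here `n = l + 2 ≥ 2`). -/
theorem stmt5 {μ l : ℕ} (c : Fin (l+2) → Fin μ)
    (A : Matrix (Fin (l+1)) (Fin (l+1)) (Lau μ)) (v : Fin (l+1) → Lau μ)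
    (hb : BoundaryRel c A v) :
    ((TU c (Fin.last (l+1)) : Lau μ) - 1) *
        (aug A v *
            last2Block l 1 1 0 (-(((tU (c (Fin.last (l+1))))⁻¹ : (Lau μ)ˣ) : Lau μ)) - 1).det
      = (((tU (c (Fin.last (l+1))))⁻¹ : (Lau μ)ˣ) : Lau μ) *
          (1 - (TU c ((Fin.last l).castSucc) : Lau μ) * (tU (c (Fin.last (l+1))) : Lau μ) ^ 2) *
          (A - 1).det := by
  set x : Lau μ := (tU (c (Fin.last (l+1))) : Lau μ) with hx
  set y : Lau μ := (((tU (c (Fin.last (l+1))))⁻¹ : (Lau μ)ˣ) : Lau μ) with hy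
  have hxy : x * y = 1 := Units.mul_inv _
  set Tm : Lau μ := (TU c ((Fin.last l).castSucc) : Lau μ) with hTm
  set Tn : Lau μ := (TU c (Fin.last (l+1)) : Lau μ) with hTn0
  have hTn : Tn = x * Tm := by rw [hTn0, TU_last]; rfl
  -- the explicit matrix
  set s : Lau μ := v (Fin.last l) + (-y) - 1 with hs
  rw [key1]
  set N : Matrix (Fin (l+2)) (Fin (l+2)) (Lau μ) := Np A v s with hN
  -- coefficients of the row operation
  set cf : Fin (l+2) → Lau μ := fun i =>
    if h : (i : ℕ) < l + 1 then ((TU c (⟨i, h⟩ : Fin (l+1)).castSucc : Lau μ) - 1) else Tn - 1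
    with hcf
  have hcflast : cf (Fin.last (l+1)) = Tn - 1 := by
    rw [hcf]; exact dif_neg (by simp)
  have hcfcast : ∀ i : Fin (l+1), cf i.castSucc = (TU c i.castSucc : Lau μ) - 1 := by
    intro i; have hi' : ¬ l < (i : ℕ) := by have := i.isLt; omega
    simp [hcf, i.isLt, hi']
  set N' : Matrix (Fin (l+2)) (Fin (l+2)) (Lau μ) :=
    N.updateRow (Fin.last (l+1)) (∑ i, cf i • N i) with hN'
  have hdet2 : N'.det = (Tn - 1) * N.det := by
    rw [hN', Matrix.det_updateRow_sum, hcflast, smul_eq_mul]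
  -- entries of N
  have ekey : ∀ (i : Fin (l+1)) (h : ((i.castSucc : Fin (l+2)) : ℕ) < l + 1),
      (⟨((i.castSucc : Fin (l+2)) : ℕ), h⟩ : Fin (l+1)) = i := by
    intro i h; ext; simp
  have hNc : ∀ (i j : Fin (l+1)), N i.castSucc j.castSucc = (A - 1) i j := by
    intro i j
    rw [hN, Np, dif_pos (by simpa using i.isLt), dif_pos (by simpa using j.isLt)]
    rw [ekey, ekey]
  have hNlastc : ∀ j : Fin (l+1), N (Fin.last (l+1)) j.castSucc = v j := by
    intro j
    rw [hN, Np, dif_neg (by simp), dif_pos (by simpa using j.isLt)]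
    rw [ekey]
  have hNclast : ∀ i : Fin (l+1), N i.castSucc (Fin.last (l+1)) = A i (Fin.last l) := by
    intro i
    rw [hN, Np, dif_pos (by simpa using i.isLt), dif_neg (by simp)]
    rw [ekey]
  have hNlast : N (Fin.last (l+1)) (Fin.last (l+1)) = s := by
    rw [hN, Np, dif_neg (by simp), dif_neg (by simp)]
  -- the new last row
  have hrow : ∀ j : Fin (l+2), N' (Fin.last (l+1)) j =
      (∑ i : Fin (l+1), ((TU c i.castSucc : Lau μ) - 1) * N i.castSucc j)
        + (Tn - 1) * N (Fin.last (l+1)) j := by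
    intro j
    rw [hN', Matrix.updateRow_self]
    rw [Finset.sum_apply]
    rw [Fin.sum_univ_castSucc (f := fun i => (cf i • N i) j)]
    simp only [Pi.smul_apply, smul_eq_mul, hcfcast, hcflast]
  have hrow0 : ∀ j : Fin (l+1), N' (Fin.last (l+1)) j.castSucc = 0 := by
    intro j
    rw [hrow]
    simp only [hNc, hNlastc]
    rw [hb j]; ring
  set q : Lau μ :=
    (∑ i : Fin (l+1), ((TU c i.castSucc : Lau μ) - 1) * A i (Fin.last l)) + (Tn - 1) * s with hq
  have hrowlast : N' (Fin.last (l+1)) (Fin.last (l+1)) = q := by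
    rw [hrow]
    simp only [hNclast, hNlast]
    rfl
  -- determinant of N' by expansion along the last row
  have hsub : N'.submatrix Fin.castSucc Fin.castSucc = A - 1 := by
    ext i j : 2
    rw [Matrix.submatrix_apply, hN',
      Matrix.updateRow_ne (Fin.ne_of_val_ne (by simpa using i.isLt.ne)), hNc]
  have hdet3 : N'.det = q * (A - 1).det := by
    rw [Matrix.det_succ_row N' (Fin.last (l+1))]
    rw [Fin.sum_univ_castSucc]
    have hz : ∀ j : Fin (l+1),
        (-1 : Lau μ) ^ ((Fin.last (l+1) : ℕ) + (j.castSucc : ℕ)) * N' (Fin.last (l+1)) j.castSucc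
          * (N'.submatrix (Fin.last (l+1)).succAbove j.castSucc.succAbove).det = 0 := by
      intro j; rw [hrow0]; ring
    rw [Finset.sum_congr rfl fun j _ => hz j, Finset.sum_const, smul_zero, zero_add]
    rw [hrowlast, Fin.succAbove_last, Fin.val_last, Even.neg_one_pow ⟨l + 1, rfl⟩, one_mul, hsub]
  -- compute q
  have hwq : ∀ i : Fin (l+1), A i (Fin.last l) =
      (A - 1) i (Fin.last l) + (if i = Fin.last l then 1 else 0) := by
    intro i
    simp only [Matrix.sub_apply, Matrix.one_apply]
    ring
  have hq2 : q = -(Tn - 1) * v (Fin.last l) + (Tm - 1) + (Tn - 1) * s := by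
    rw [hq]
    congr 1
    simp only [hwq, mul_add, Finset.sum_add_distrib, hb (Fin.last l), mul_ite, mul_one, mul_zero,
      Finset.sum_ite_eq', Finset.mem_univ, if_pos]
    rfl
  rw [← hdet2, hdet3, hq2, hs, hTn]
  linear_combination ((Tm * (x - 1)) * (A - 1).det) * hxy
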